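/- Every group of order 4p, where p is an odd prime, is 2-generated. -/
import Mathlib

open Subgroup

/-- Every group of order `4 * p`, where `p` is an odd prime, is 2-generated. -/
theorem stmt_18 (p : ℕ) (hp : p.Prime) (hodd : Odd p)
    (G : Type) [Group G] [Finite G] (hG : Nat.card G = 4 * p) :
    ∃ a b : G, Subgroup.closure {a, b} = ⊤ := by
  have hp2 : p ≠ 2 := by rintro rfl; simp [Nat.odd_iff] at hodd
  haveI : Fact p.Prime := ⟨hp⟩
  have hppos : 0 < p := hp.pos
  have hcop : Nat.Coprime 4 p := by
    have h2 : Nat.Coprime 2 p := (Nat.coprime_primes Nat.prime_two hp).mpr (Ne.symm hp2)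
    simpa using h2.pow_left 2
  have key : ∀ H : Subgroup G, p ∣ Nat.card H → 4 ∣ Nat.card H → H = ⊤ := by
    intro H h1 h2
    apply Subgroup.eq_top_of_card_eq
    have hdvd : Nat.card H ∣ 4 * p := hG ▸ Subgroup.card_subgroup_dvd_card H
    have h42 : 4 * p ∣ Nat.card H := Nat.Coprime.mul_dvd_of_dvd_of_dvd hcop h2 h1
    rw [hG]; exact Nat.dvd_antisymm hdvd h42
  obtain ⟨a, ha⟩ : ∃ a : G, orderOf a = p := by
    haveI := Fintype.ofFinite G
    exact exists_prime_orderOf_dvd_card p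
      (by rw [← Nat.card_eq_fintype_card, hG]; exact ⟨4, by ring⟩)
  have hdvd_of_mem : ∀ (x : G) (H : Subgroup G), x ∈ H → orderOf x ∣ Nat.card H := by
    intro x H hx
    rw [← Nat.card_zpowers]
    exact Subgroup.card_dvd_of_le (zpowers_le.mpr hx)
  have eq_of_le_card : ∀ K L : Subgroup G, K ≤ L → Nat.card L ≤ Nat.card K → K = L := by
    intro K L hle hcard
    exact SetLike.coe_injective (Set.eq_of_subset_of_ncard_le hle
      (by rwa [← Nat.card_coe_set_eq, ← Nat.card_coe_set_eq]) (Set.toFinite _))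
  by_cases huniq : ∀ x : G, orderOf x = p → zpowers x = zpowers a
  · -- all order-p elements generate the same subgroup
    by_cases h4 : ∃ b : G, orderOf b = 4
    · obtain ⟨b, hb⟩ := h4
      refine ⟨a, b, key _ ?_ ?_⟩
      · exact ha ▸ hdvd_of_mem a _ (subset_closure (by simp))
      · exact hb ▸ hdvd_of_mem b _ (subset_closure (by simp))
    · push_neg at h4
      haveI : Fact (Nat.Prime 2) := ⟨Nat.prime_two⟩
      obtain ⟨Q⟩ : Nonempty (Sylow 2 G) := inferInstance
      have hQ4 : Nat.card (Q : Subgroup G) = 4 := by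
        rw [Sylow.card_eq_multiplicity]
        have hfac : (Nat.card G).factorization 2 = 2 := by
          rw [hG, show (4 : ℕ) * p = 2 ^ 2 * p by ring,
            Nat.factorization_mul (by norm_num) hppos.ne', Finsupp.add_apply,
            Nat.prime_two.factorization_pow, hp.factorization, Finsupp.single_apply,
            Finsupp.single_apply]
          simp [hp2]
        rw [hfac]; norm_num
      have hsq : ∀ x : G, x ∈ (Q : Subgroup G) → x ^ 2 = 1 := by
        intro x hx
        have h1 : orderOf x ∣ 4 := hQ4 ▸ hdvd_of_mem x Q hx
        have h2 : orderOf x ≠ 4 := h4 x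
        have hle : orderOf x ≤ 4 := Nat.le_of_dvd (by norm_num) h1
        have : orderOf x ∣ 2 := by interval_cases h : (orderOf x) <;> omega
        exact orderOf_dvd_iff_pow_eq_one.mp this
      obtain ⟨s, hsQ, hs1⟩ : ∃ s : G, s ∈ (Q : Subgroup G) ∧ s ≠ 1 := by
        rcases (Q : Subgroup G).bot_or_exists_ne_one with hbot | ⟨s, hs, hs1⟩
        · rw [hbot] at hQ4; simp at hQ4
        · exact ⟨s, hs, hs1⟩
      obtain ⟨t, htQ, ht1, hts⟩ : ∃ t : G, t ∈ (Q : Subgroup G) ∧ t ≠ 1 ∧ t ≠ s := by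
        by_contra hcon
        push_neg at hcon
        have hsub : ((Q : Subgroup G) : Set G) ⊆ {1, s} := by
          intro x hx
          by_cases hx1 : x = 1
          · simp [hx1]
          · simp [hcon x hx hx1]
        have hle2 : Nat.card (Q : Subgroup G) ≤ 2 := by
          calc Nat.card (Q : Subgroup G) = ((Q : Subgroup G) : Set G).ncard :=
                Nat.card_coe_set_eq _
            _ ≤ ({1, s} : Set G).ncard := Set.ncard_le_ncard hsub (Set.toFinite _)
            _ ≤ 2 := by
                rw [Set.ncard_pair (Ne.symm hs1)]
        omega
      have hconj : ∀ v : G, v ^ 2 = 1 → v * a * v⁻¹ = a ∨ v * a * v⁻¹ = a⁻¹ := by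
        intro v hv
        have hvv1 : v * v = 1 := by rw [← pow_two]; exact hv
        have hord : orderOf (v * a * v⁻¹) = p := by
          have := (MulAut.conj v).orderOf_eq a
          simpa [MulAut.conj_apply, ha] using this
        have hmem : v * a * v⁻¹ ∈ zpowers a := by
          rw [← huniq _ hord]; exact mem_zpowers _
        obtain ⟨n, hn'⟩ := hmem
        have hn : a ^ n = v * a * v⁻¹ := hn'
        have hnn : a ^ (n * n) = a := by
          calc a ^ (n * n) = (a ^ n) ^ n := by rw [zpow_mul]
            _ = (v * a * v⁻¹) ^ n := by rw [hn]
            _ = v * a ^ n * v⁻¹ := conj_zpow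
            _ = v * (v * a * v⁻¹) * v⁻¹ := by rw [hn]
            _ = (v * v) * a * ((v * v)⁻¹) := by group
            _ = a := by rw [hvv1]; simp
        have hdvd1 : ((p : ℤ)) ∣ n * n - 1 := by
          rw [← ha, orderOf_dvd_iff_zpow_eq_one, zpow_sub, hnn, zpow_one, mul_inv_cancel]
        have hfac : ((p : ℤ)) ∣ (n - 1) * (n + 1) := by
          rw [show (n - 1) * (n + 1) = n * n - 1 by ring]; exact hdvd1
        rcases (Nat.prime_iff_prime_int.mp hp).dvd_mul.mp hfac with h | h
        · left
          have h1 : a ^ (n - 1) = 1 := by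
            rw [← orderOf_dvd_iff_zpow_eq_one, ha]; exact h
          have h2 : a ^ n = a := by
            calc a ^ n = a ^ (n - 1 + 1) := by ring_nf
              _ = a ^ (n - 1) * a ^ (1 : ℤ) := zpow_add a _ _
              _ = a := by rw [h1, one_mul, zpow_one]
          rw [← hn, h2]
        · right
          have h1 : a ^ (n + 1) = 1 := by
            rw [← orderOf_dvd_iff_zpow_eq_one, ha]; exact h
          have h2 : a ^ n = a⁻¹ := by
            have hmul : a ^ n * a = 1 := by
              calc a ^ n * a = a ^ n * a ^ (1 : ℤ) := by rw [zpow_one]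
                _ = a ^ (n + 1) := (zpow_add a n 1).symm
                _ = 1 := h1
            exact eq_inv_of_mul_eq_one_left hmul
          rw [← hn, h2]
      obtain ⟨v, w, hvQ, hwQ, hv1, hw1, hvw, hcomm⟩ :
          ∃ v w : G, v ∈ (Q : Subgroup G) ∧ w ∈ (Q : Subgroup G) ∧ v ≠ 1 ∧ w ≠ 1 ∧ v ≠ w ∧
            v * a * v⁻¹ = a := by
        have hssq := hsq s hsQ
        have htsq := hsq t htQ
        have hsinv : s⁻¹ = s := inv_eq_of_mul_eq_one_right (by rw [← pow_two]; exact hssq)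
        rcases hconj s hssq with h | h
        · exact ⟨s, t, hsQ, htQ, hs1, ht1, fun e => hts e.symm, h⟩
        · rcases hconj t htsq with h' | h'
          · exact ⟨t, s, htQ, hsQ, ht1, hs1, hts, h'⟩
          · refine ⟨t * s, s, mul_mem htQ hsQ, hsQ, ?_, hs1, ?_, ?_⟩
            · intro e
              apply hts
              exact (eq_inv_of_mul_eq_one_left e).trans hsinv
            · intro e
              apply ht1
              have e' : t * s = 1 * s := by rw [one_mul]; exact e
              exact mul_right_cancel e'
            · rw [mul_inv_rev,
                show t * s * a * (s⁻¹ * t⁻¹) = t * (s * a * s⁻¹) * t⁻¹ by group, h,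
                show t * a⁻¹ * t⁻¹ = (t * a * t⁻¹)⁻¹ by group, h', inv_inv]
      have hcommute : Commute a v := by
        have : v * a = a * v := by
          rw [mul_inv_eq_iff_eq_mul] at hcomm; exact hcomm
        exact this.symm
      refine ⟨a * v, w, key _ ?_ ?_⟩
      · -- p divides
        have havH : a * v ∈ closure ({a * v, w} : Set G) := subset_closure (by simp)
        have hvsq : v ^ 2 = 1 := hsq v hvQ
        obtain ⟨k, hk⟩ := hodd
        have hap : a ^ p = 1 := by rw [← ha]; exact pow_orderOf_eq_one a
        have hvH : v ∈ closure ({a * v, w} : Set G) := by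
          have hpow : (a * v) ^ p = v := by
            rw [hcommute.mul_pow, hap, one_mul, hk,
              pow_add, pow_mul, hvsq, one_pow, one_mul, pow_one]
          have hmem := pow_mem havH p
          rwa [hpow] at hmem
        have haH : a ∈ closure ({a * v, w} : Set G) := by
          have hmem := mul_mem havH (inv_mem hvH)
          rwa [show a * v * v⁻¹ = a by group] at hmem
        exact ha ▸ hdvd_of_mem a _ haH
      · -- 4 divides
        have havH : a * v ∈ closure ({a * v, w} : Set G) := subset_closure (by simp)
        have hvsq : v ^ 2 = 1 := hsq v hvQ
        obtain ⟨k, hk⟩ := hodd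
        have hap : a ^ p = 1 := by rw [← ha]; exact pow_orderOf_eq_one a
        have hvH : v ∈ closure ({a * v, w} : Set G) := by
          have hpow : (a * v) ^ p = v := by
            rw [hcommute.mul_pow, hap, one_mul, hk,
              pow_add, pow_mul, hvsq, one_pow, one_mul, pow_one]
          have hmem := pow_mem havH p
          rwa [hpow] at hmem
        have hwH : w ∈ closure ({a * v, w} : Set G) := subset_closure (by simp)
        set K := closure ({v, w} : Set G) with hK
        have hKQ : K ≤ (Q : Subgroup G) := by
          rw [hK, closure_le]
          rintro x (rfl | rfl) <;> [exact hvQ; exact hwQ]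
        have hKH : K ≤ closure ({a * v, w} : Set G) := by
          rw [hK, closure_le]
          rintro x (rfl | rfl) <;> [exact hvH; exact hwH]
        have hKdvd : Nat.card K ∣ 4 := hQ4 ▸ Subgroup.card_dvd_of_le hKQ
        have h3 : 3 ≤ Nat.card K := by
          have hsubset : ({1, v, w} : Set G) ⊆ (K : Set G) := by
            rintro x (rfl | rfl | rfl)
            · exact one_mem K
            · exact subset_closure (by simp)
            · exact subset_closure (by simp)
          have hcard3 : ({1, v, w} : Set G).ncard = 3 := by
            rw [Set.ncard_insert_of_notMem (by simp [Ne.symm hv1, Ne.symm hw1]),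
              Set.ncard_pair hvw]
          calc 3 = ({1, v, w} : Set G).ncard := hcard3.symm
            _ ≤ (K : Set G).ncard := Set.ncard_le_ncard hsubset (Set.toFinite _)
            _ = Nat.card K := (Nat.card_coe_set_eq _).symm
        have hK4 : Nat.card K = 4 := by
          have hle : Nat.card K ≤ 4 := Nat.le_of_dvd (by norm_num) hKdvd
          interval_cases h : (Nat.card K) <;> omega
        exact hK4 ▸ Subgroup.card_dvd_of_le hKH
  · push_neg at huniq
    obtain ⟨a', ha', hne⟩ := huniq
    refine ⟨a, a', ?_⟩
    set H := Subgroup.closure ({a, a'} : Set G) with hH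
    have haH : a ∈ H := subset_closure (by simp)
    have ha'H : a' ∈ H := subset_closure (by simp)
    have hpdvd : p ∣ Nat.card H := ha ▸ hdvd_of_mem a H haH
    have hHdvd : Nat.card H ∣ 4 * p := hG ▸ Subgroup.card_subgroup_dvd_card H
    obtain ⟨m, hm⟩ := hpdvd
    have hm4 : m ∣ 4 := by
      have h := hHdvd
      rw [hm, mul_comm 4 p] at h
      exact (Nat.mul_dvd_mul_iff_left hppos).mp h
    have hzpa : Nat.card (zpowers a) = p := by rw [Nat.card_zpowers, ha]
    have hzpa' : Nat.card (zpowers a') = p := by rw [Nat.card_zpowers, ha']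
    have hm1 : m ≠ 1 := by
      rintro rfl
      rw [mul_one] at hm
      have e1 : zpowers a = H :=
        eq_of_le_card _ _ (zpowers_le.mpr haH) (by rw [hm, hzpa])
      have e2 : zpowers a' = H :=
        eq_of_le_card _ _ (zpowers_le.mpr ha'H) (by rw [hm, hzpa'])
      exact hne (e2.trans e1.symm)
    have hm2 : m ≠ 2 := by
      rintro rfl
      -- card H = 2p; index-2 argument in H
      have hle : zpowers a ≤ H := zpowers_le.mpr haH
      have hcardK : Nat.card ((zpowers a).subgroupOf H) = p := by
        rw [Nat.card_congr (Subgroup.subgroupOfEquivOfLe hle).toEquiv, hzpa]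
      have hidx : ((zpowers a).subgroupOf H).index = 2 := by
        have h1 := Subgroup.card_mul_index ((zpowers a).subgroupOf H)
        rw [hcardK, hm] at h1
        exact Nat.eq_of_mul_eq_mul_left hppos h1
      set a'' : H := ⟨a', ha'H⟩ with ha''
      have hsqm : a'' ^ 2 ∈ (zpowers a).subgroupOf H :=
        Subgroup.sq_mem_of_index_two hidx a''
      have horda'' : orderOf a'' = p := by
        rw [← ha']
        exact (orderOf_submonoid a'').symm
      have hpow1 : a'' ^ p = 1 := by rw [← horda'']; exact pow_orderOf_eq_one a''
      obtain ⟨k, hk⟩ := hodd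
      have hmem : a'' ∈ (zpowers a).subgroupOf H := by
        have heq : a'' = (a'' ^ 2) ^ (k + 1) := by
          rw [← pow_mul, show 2 * (k + 1) = p + 1 by omega, pow_succ, hpow1, one_mul]
        rw [heq]
        exact pow_mem hsqm (k + 1)
      have hmem' : a' ∈ zpowers a := Subgroup.mem_subgroupOf.mp hmem
      have : zpowers a' = zpowers a :=
        eq_of_le_card _ _ (zpowers_le.mpr hmem') (by rw [hzpa, hzpa'])
      exact hne this
    have hm'' : m = 4 := by
      have hle : m ≤ 4 := Nat.le_of_dvd (by norm_num) hm4
      have hpos : 0 < m := by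
        rcases Nat.eq_zero_or_pos m with h | h
        · exfalso
          rw [h, mul_zero] at hm
          exact (Nat.card_pos (α := H)).ne' hm
        · exact h
      interval_cases m <;> omega
    apply Subgroup.eq_top_of_card_eq
    rw [hG, hm, hm'', mul_comm]
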